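/- Let 𝔹 = (B, E, E^∨) be a reduced DK-triple, i.e. B = E^∨ ∘ E. Then M = E^∨ (the Monos are exactly the dual Epis), Reg = E (the regular arrows are exactly the Epis), and M ∩ Reg consists exactly of the isomorphisms of B. -/

import Mathlib

open CategoryTheory CategoryTheory.Limits

universe v u v' u'

namespace DK

variable {B : Type u} [Category.{v} B]

/-- The singular arrows `Sing := E^∨_≠ ∘ B`: arrows of the form
(non-invertible dual Epi) ∘ (arbitrary arrow). -/
def Sing (Edual : MorphismProperty B) : MorphismProperty B :=
  fun X Y f => ∃ (Z : B) (g : X ⟶ Z) (h : Z ⟶ Y), Edual h ∧ ¬ IsIso h ∧ f = g ≫ h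

/-- The regular arrows `Reg := B ∖ Sing`. -/
def Regular (Edual : MorphismProperty B) : MorphismProperty B :=
  fun _ _ f => ¬ Sing Edual f

/-- The Monos `M := B ∖ (B ∘ E_≠)`: arrows which are not of the form
(arbitrary arrow) ∘ (non-invertible Epi). -/
def Mon (E : MorphismProperty B) : MorphismProperty B :=
  fun X Y f => ¬ ∃ (Z : B) (e : X ⟶ Z) (g : Z ⟶ Y), E e ∧ ¬ IsIso e ∧ f = e ≫ g

/-- Two arrows out of `b` are isomorphic as objects of the category `E(b)` of
(Epis) under `b`. -/
def EpiEquiv {b c c' : B} (e : b ⟶ c) (e' : b ⟶ c') : Prop :=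
  ∃ u : c ≅ c', e ≫ u.hom = e'

/-- Two arrows into `b` are isomorphic as objects of the category `E^∨(b)` of
(dual Epis) over `b`. -/
def DualEquiv {b c c' : B} (d : c ⟶ b) (d' : c' ⟶ b) : Prop :=
  ∃ u : c ≅ c', u.hom ≫ d' = d

/-- A (T1)-factorization of the arrow `f` as `e^∨ ∘ f̄ ∘ e` with `e ∈ E`,
`f̄ ∈ M ∩ Reg` and `e^∨ ∈ E^∨`. -/
structure Fact (E Edual : MorphismProperty B) {X Y : B} (f : X ⟶ Y) where
  Z : B
  W : B
  e : X ⟶ Z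
  m : Z ⟶ W
  d : W ⟶ Y
  he : E e
  hm : Mon E m ∧ Regular Edual m
  hd : Edual d
  fac : e ≫ m ≫ d = f

/-- Axiom (T2) at the object `b`: there are finitely many Epis out of `b` and
dual Epis into `b` up to isomorphism, and they can be enumerated by `Fin n`
(`n ≥ 1`) in such a way that the pairing matrix `⟨e_i ; e^∨_j⟩ = e_i ∘ e^∨_j`
has isomorphisms on the diagonal and non-isomorphisms below the diagonal. -/
def TriangularAt (E Edual : MorphismProperty B) (b : B) : Prop :=
  ∃ n : ℕ, 0 < n ∧ ∃ (cE : Fin n → B) (eR : ∀ i, b ⟶ cE i)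
      (cD : Fin n → B) (dR : ∀ i, cD i ⟶ b),
    (∀ i, E (eR i)) ∧ (∀ i, Edual (dR i)) ∧
    (∀ {c : B} (e : b ⟶ c), E e → ∃! i : Fin n, EpiEquiv e (eR i)) ∧
    (∀ {c : B} (d : c ⟶ b), Edual d → ∃! i : Fin n, DualEquiv d (dR i)) ∧
    (∀ i : Fin n, IsIso (dR i ≫ eR i)) ∧
    (∀ i j : Fin n, j < i → ¬ IsIso (dR j ≫ eR i))

/-- The diagonalizable version of axiom (T2) at `b`: the pairing matrix has
isomorphisms on the diagonal and non-isomorphisms in all off-diagonal spots. -/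
def DiagonalAt (E Edual : MorphismProperty B) (b : B) : Prop :=
  ∃ n : ℕ, 0 < n ∧ ∃ (cE : Fin n → B) (eR : ∀ i, b ⟶ cE i)
      (cD : Fin n → B) (dR : ∀ i, cD i ⟶ b),
    (∀ i, E (eR i)) ∧ (∀ i, Edual (dR i)) ∧
    (∀ {c : B} (e : b ⟶ c), E e → ∃! i : Fin n, EpiEquiv e (eR i)) ∧
    (∀ {c : B} (d : c ⟶ b), Edual d → ∃! i : Fin n, DualEquiv d (dR i)) ∧
    (∀ i : Fin n, IsIso (dR i ≫ eR i)) ∧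
    (∀ i j : Fin n, i ≠ j → ¬ IsIso (dR j ≫ eR i))

/-- A DK-triple `𝔹 = (B, E, E^∨)`: a category `B` with two wide subcategories
`E` (the Epis) and `E^∨` (the dual Epis), each containing all isomorphisms,
subject to the axioms (T1)–(T5). -/
structure DKTriple (B : Type u) [Category.{v} B] where
  /-- the Epis -/
  E : MorphismProperty B
  /-- the dual Epis -/
  Edual : MorphismProperty B
  E_iso : ∀ {X Y : B} (f : X ⟶ Y), IsIso f → E f
  Edual_iso : ∀ {X Y : B} (f : X ⟶ Y), IsIso f → Edual f
  E_comp : ∀ {X Y Z : B} {f : X ⟶ Y} {g : Y ⟶ Z}, E f → E g → E (f ≫ g)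
  Edual_comp : ∀ {X Y Z : B} {f : X ⟶ Y} {g : Y ⟶ Z}, Edual f → Edual g → Edual (f ≫ g)
  /-- (T1), existence part -/
  t1_exists : ∀ {X Y : B} (f : X ⟶ Y), Nonempty (Fact E Edual f)
  /-- (T1), uniqueness up to unique isomorphism -/
  t1_unique : ∀ {X Y : B} {f : X ⟶ Y} (F₁ F₂ : Fact E Edual f),
    ∃! p : (F₁.Z ≅ F₂.Z) × (F₁.W ≅ F₂.W),
      F₁.e ≫ p.1.hom = F₂.e ∧ p.1.hom ≫ F₂.m = F₁.m ≫ p.2.hom ∧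
        p.2.hom ≫ F₂.d = F₁.d
  /-- (T2) -/
  t2 : ∀ b : B, TriangularAt E Edual b
  /-- (T3): `E^∨ ∘ E` is closed under composition -/
  t3 : ∀ {X Y Z : B} {f : X ⟶ Y} {g : Y ⟶ Z},
    (∃ (W : B) (e : X ⟶ W) (d : W ⟶ Y), E e ∧ Edual d ∧ f = e ≫ d) →
    (∃ (W : B) (e : Y ⟶ W) (d : W ⟶ Z), E e ∧ Edual d ∧ g = e ≫ d) →
    ∃ (W : B) (e : X ⟶ W) (d : W ⟶ Z), E e ∧ Edual d ∧ f ≫ g = e ≫ d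
  /-- (T4): `(M ∩ Reg) ∘ (M ∩ Reg) ⊆ M` -/
  t4 : ∀ {X Y Z : B} {f : X ⟶ Y} {g : Y ⟶ Z},
    (Mon E f ∧ Regular Edual f) → (Mon E g ∧ Regular Edual g) → Mon E (f ≫ g)
  /-- (T5): `M ∘ Sing ⊆ Sing` -/
  t5 : ∀ {X Y Z : B} {f : X ⟶ Y} {g : Y ⟶ Z},
    Sing Edual f → Mon E g → Sing Edual (f ≫ g)

/-- A DK-triple is *reduced* if `B = E^∨ ∘ E`. -/
def DKTriple.Reduced (T : DKTriple B) : Prop :=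
  ∀ {X Y : B} (f : X ⟶ Y),
    ∃ (W : B) (e : X ⟶ W) (d : W ⟶ Y), T.E e ∧ T.Edual d ∧ f = e ≫ d

end DK

namespace DK

/-- An Epi with a retraction is an isomorphism (uses (T2)). -/
lemma splitE {B : Type u} [Category.{v} B] (T : DKTriple B) {b c : B} {e : b ⟶ c}
    (he : T.E e) {r : c ⟶ b} (hr : e ≫ r = 𝟙 b) : IsIso e := by
  obtain ⟨n, hn, cE, eR, cD, dR, hE, hD, uE, uD, diag, _⟩ := T.t2 b
  obtain ⟨i, ⟨u, hu⟩, _⟩ := uE e he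
  haveI hq : IsIso (dR i ≫ eR i) := diag i
  have hρ : eR i ≫ (u.inv ≫ r) = 𝟙 b := by
    rw [← hu]
    simp [hr]
  have h1 : (dR i ≫ eR i) ≫ (u.inv ≫ r) = dR i := by
    rw [Category.assoc, hρ, Category.comp_id]
  have hρ' : u.inv ≫ r = inv (dR i ≫ eR i) ≫ dR i := by
    calc u.inv ≫ r = inv (dR i ≫ eR i) ≫ ((dR i ≫ eR i) ≫ (u.inv ≫ r)) := by
          rw [IsIso.inv_hom_id_assoc]
      _ = inv (dR i ≫ eR i) ≫ dR i := by rw [h1]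
  have hdR : IsIso (dR i) := by
    refine ⟨eR i ≫ inv (dR i ≫ eR i), by rw [← Category.assoc, IsIso.hom_inv_id], ?_⟩
    rw [Category.assoc, ← hρ']
    exact hρ
  have heR : IsIso (eR i) := by
    have : eR i = inv (dR i) ≫ (dR i ≫ eR i) := by simp
    rw [this]; infer_instance
  have : e = eR i ≫ u.inv := by rw [← hu]; simp
  rw [this]; infer_instance

/-- A dual Epi with a section is an isomorphism (uses (T2)). -/
lemma splitD {B : Type u} [Category.{v} B] (T : DKTriple B) {b w : B} {d : w ⟶ b}
    (hd : T.Edual d) {s : b ⟶ w} (hs : s ≫ d = 𝟙 b) : IsIso d := by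
  obtain ⟨n, hn, cE, eR, cD, dR, hE, hD, uE, uD, diag, _⟩ := T.t2 b
  obtain ⟨j, ⟨v, hv⟩, _⟩ := uD d hd
  haveI hq : IsIso (dR j ≫ eR j) := diag j
  have hσ : (s ≫ v.hom) ≫ dR j = 𝟙 b := by
    rw [Category.assoc, hv, hs]
  have h1 : (s ≫ v.hom) ≫ (dR j ≫ eR j) = eR j := by
    rw [← Category.assoc, hσ, Category.id_comp]
  have hσ' : s ≫ v.hom = eR j ≫ inv (dR j ≫ eR j) := by
    calc s ≫ v.hom = ((s ≫ v.hom) ≫ (dR j ≫ eR j)) ≫ inv (dR j ≫ eR j) := by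
          rw [Category.assoc, IsIso.hom_inv_id, Category.comp_id]
      _ = eR j ≫ inv (dR j ≫ eR j) := by rw [h1]
  have hdR : IsIso (dR j) := by
    refine ⟨s ≫ v.hom, ?_, hσ⟩
    rw [hσ', ← Category.assoc, IsIso.hom_inv_id]
  have : d = v.hom ≫ dR j := hv.symm
  rw [this]; infer_instance

lemma mon_id {B : Type u} [Category.{v} B] (T : DKTriple B) (b : B) :
    Mon T.E (𝟙 b) := by
  rintro ⟨Z, e, g, he, hne, hfac⟩
  exact hne (splitE T he hfac.symm)

lemma reg_id {B : Type u} [Category.{v} B] (T : DKTriple B) (b : B) :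
    Regular T.Edual (𝟙 b) := by
  rintro ⟨Z, g, h, hd, hnh, hfac⟩
  exact hnh (splitD T hd hfac.symm)

/-- Every dual Epi is a Mono (uses (T1) and (T2)). -/
lemma edual_mon {B : Type u} [Category.{v} B] (T : DKTriple B) {X Y : B}
    {f : X ⟶ Y} (hf : T.Edual f) : Mon T.E f := by
  rintro ⟨Z, e, g, he, hne, hfac⟩
  obtain ⟨F⟩ := T.t1_exists g
  have hiso : IsIso (𝟙 X) := inferInstance
  set F₂ : Fact T.E T.Edual f :=
    ⟨F.Z, F.W, e ≫ F.e, F.m, F.d, T.E_comp he F.he, F.hm, F.hd, by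
      rw [Category.assoc, F.fac, ← hfac]⟩ with hF₂
  set F₁ : Fact T.E T.Edual f :=
    ⟨X, X, 𝟙 X, 𝟙 X, f, T.E_iso _ hiso, ⟨mon_id T X, reg_id T X⟩, hf, by simp⟩
  obtain ⟨p, ⟨h1, h2, h3⟩, _⟩ := T.t1_unique F₂ F₁
  have : e ≫ (F.e ≫ p.1.hom) = 𝟙 X := by
    rw [← Category.assoc]
    exact h1
  exact hne (splitE T he this)

/-- Every Epi is regular (uses (T1) and (T2)). -/
lemma e_reg {B : Type u} [Category.{v} B] (T : DKTriple B) {X Y : B}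
    {f : X ⟶ Y} (hf : T.E f) : Regular T.Edual f := by
  rintro ⟨Z, g, h, hd, hnh, hfac⟩
  obtain ⟨F⟩ := T.t1_exists g
  set F₂ : Fact T.E T.Edual f :=
    ⟨F.Z, F.W, F.e, F.m, F.d ≫ h, F.he, F.hm, T.Edual_comp F.hd hd, by
      rw [hfac]
      conv_rhs => rw [← F.fac]
      simp only [Category.assoc]⟩
  set F₁ : Fact T.E T.Edual f :=
    ⟨Y, Y, f, 𝟙 Y, 𝟙 Y, hf, ⟨mon_id T Y, reg_id T Y⟩, T.Edual_iso _ inferInstance, by simp⟩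
  obtain ⟨p, ⟨h1, h2, h3⟩, _⟩ := T.t1_unique F₂ F₁
  have hdh : F.d ≫ h = p.2.hom := by
    have := h3
    change p.2.hom ≫ 𝟙 Y = F.d ≫ h at this
    exact this.symm.trans (Category.comp_id _)
  have : (p.2.inv ≫ F.d) ≫ h = 𝟙 Y := by
    rw [Category.assoc, hdh, Iso.inv_hom_id]
  exact hnh (splitD T hd this)

/-- In a reduced DK-triple (`B = E^∨ ∘ E`), the Monos are exactly the dual Epis,
the regular arrows are exactly the Epis, and `M ∩ Reg` consists exactly of the
isomorphisms of `B`. -/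
theorem reduced_mono_eq_dual_reg_eq_epi_monoReg_eq_iso
    {B : Type u} [Category.{v} B] (T : DKTriple B) (hred : T.Reduced) :
    (∀ {X Y : B} (f : X ⟶ Y), Mon T.E f ↔ T.Edual f) ∧
    (∀ {X Y : B} (f : X ⟶ Y), Regular T.Edual f ↔ T.E f) ∧
    (∀ {X Y : B} (f : X ⟶ Y), (Mon T.E f ∧ Regular T.Edual f) ↔ IsIso f) := by
  have key : ∀ {X Y : B} (f : X ⟶ Y), Mon T.E f →
      ∃ (W : B) (e : X ⟶ W) (d : W ⟶ Y), IsIso e ∧ T.Edual d ∧ f = e ≫ d := by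
    intro X Y f hm
    obtain ⟨W, e, d, he, hd, hfac⟩ := hred f
    have hie : IsIso e := by
      by_contra h
      exact hm ⟨W, e, d, he, h, hfac⟩
    exact ⟨W, e, d, hie, hd, hfac⟩
  have key' : ∀ {X Y : B} (f : X ⟶ Y), Regular T.Edual f →
      ∃ (W : B) (e : X ⟶ W) (d : W ⟶ Y), T.E e ∧ IsIso d ∧ f = e ≫ d := by
    intro X Y f hr
    obtain ⟨W, e, d, he, hd, hfac⟩ := hred f
    have hid : IsIso d := by
      by_contra h
      exact hr ⟨W, e, d, hd, h, hfac⟩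
    exact ⟨W, e, d, he, hid, hfac⟩
  refine ⟨?_, ?_, ?_⟩
  · intro X Y f
    constructor
    · intro hm
      obtain ⟨W, e, d, hie, hd, hfac⟩ := key f hm
      rw [hfac]
      exact T.Edual_comp (T.Edual_iso e hie) hd
    · exact edual_mon T
  · intro X Y f
    constructor
    · intro hr
      obtain ⟨W, e, d, he, hid, hfac⟩ := key' f hr
      rw [hfac]
      exact T.E_comp he (T.E_iso d hid)
    · exact e_reg T
  · intro X Y f
    constructor
    · rintro ⟨hm, hr⟩
      obtain ⟨W, e, d, he, hd, hfac⟩ := hred f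
      have hie : IsIso e := by
        by_contra h
        exact hm ⟨W, e, d, he, h, hfac⟩
      have hid : IsIso d := by
        by_contra h
        exact hr ⟨W, e, d, hd, h, hfac⟩
      rw [hfac]
      exact IsIso.comp_isIso
    · intro hf
      exact ⟨edual_mon T (T.Edual_iso f hf), e_reg T (T.E_iso f hf)⟩

end DK
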